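/- If a non-increasing probability distribution P = (p_1,...,p_n), n ≥ 3, satisfying the AUH constraints maximizes the average length L(P), then p_1 = q_2 = sum_{i≥3} p_i. -/
import Mathlib


open Finset

/-- A non-increasing probability distribution on symbols `1,…,n` satisfying the
anti-uniform Huffman (AUH) constraints. -/
def IsAUH (n : ℕ) (p : ℕ → ℝ) : Prop :=
  (∀ i ∈ Finset.Icc 1 n, 0 ≤ p i) ∧
  (∀ i j, 1 ≤ i → i ≤ j → j ≤ n → p j ≤ p i) ∧
  (∑ i ∈ Finset.Icc 1 n, p i = 1) ∧
  (∀ i, 1 ≤ i → i ≤ n - 2 → ∑ j ∈ Finset.Icc (i + 2) n, p j ≤ p i)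

/-- Average length of the anti-uniform code on `n` symbols. -/
noncomputable def avgLen (n : ℕ) (p : ℕ → ℝ) : ℝ :=
  ∑ i ∈ Finset.Icc 1 (n - 1), (i : ℝ) * p i + ((n : ℝ) - 1) * p n

lemma sum_shift' (s : Finset ℕ) (p : ℕ → ℝ) (a b : ℕ) (ε : ℝ) :
    ∑ i ∈ s, (p i + (if i = b then ε else 0) - (if i = a then ε else 0))
      = ∑ i ∈ s, p i + (if b ∈ s then ε else 0) - (if a ∈ s then ε else 0) := by
  simp [Finset.sum_add_distrib, Finset.sum_sub_distrib, Finset.sum_ite_eq']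

lemma sum_shift_mul (s : Finset ℕ) (p : ℕ → ℝ) (a b : ℕ) (ε : ℝ) :
    ∑ i ∈ s, (i:ℝ) * (p i + (if i = b then ε else 0) - (if i = a then ε else 0))
      = ∑ i ∈ s, (i:ℝ) * p i + (if b ∈ s then (b:ℝ) * ε else 0)
        - (if a ∈ s then (a:ℝ) * ε else 0) := by
  simp [mul_add, mul_sub, Finset.sum_add_distrib, Finset.sum_sub_distrib, mul_ite, mul_zero,
    Finset.sum_ite_eq']

/-- If an AUH distribution on `n ≥ 3` symbols maximizes the average length, then
`p 1 = q 2 = ∑_{i ≥ 3} p i`. -/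
theorem maxAvgLen_first_eq (n : ℕ) (hn : 3 ≤ n) (p : ℕ → ℝ) (hp : IsAUH n p)
    (hmax : ∀ p' : ℕ → ℝ, IsAUH n p' → avgLen n p' ≤ avgLen n p) :
    p 1 = ∑ i ∈ Finset.Icc 3 n, p i := by
  obtain ⟨hnn, hmono, hsum, hc⟩ := hp
  by_contra hne
  have h1 : ∑ i ∈ Icc 3 n, p i ≤ p 1 := hc 1 le_rfl (by omega)
  have hslack : ∑ i ∈ Icc 3 n, p i < p 1 := lt_of_le_of_ne h1 fun h => hne h.symm
  have hQ0 : (0:ℝ) ≤ ∑ i ∈ Icc 3 n, p i :=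
    Finset.sum_nonneg fun i hi => hnn i (by simp only [mem_Icc] at hi ⊢; omega)
  have hp3Q : p 3 ≤ ∑ i ∈ Icc 3 n, p i :=
    Finset.single_le_sum (f := p) (fun i hi => hnn i (by simp only [mem_Icc] at hi ⊢; omega))
      (by simp only [mem_Icc]; omega)
  rcases eq_or_lt_of_le hn with h3 | h4
  · -- n = 3 : compare with the uniform distribution
    subst h3
    have hI33 : Icc 3 3 = ({3} : Finset ℕ) := Finset.Icc_self 3
    rw [hI33, Finset.sum_singleton] at hslack
    have hu : IsAUH 3 (fun _ => (1:ℝ)/3) := by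
      refine ⟨fun i _ => by norm_num, fun i j _ _ _ => le_rfl, ?_, ?_⟩
      · rw [Finset.sum_const]
        simp [Nat.card_Icc]
      · intro i h1 h2
        have hi1 : i = 1 := by omega
        subst hi1
        rw [hI33, Finset.sum_singleton]
    have hle := hmax _ hu
    have hI12 : Icc 1 (3-1) = ({1, 2} : Finset ℕ) := rfl
    have hl1 : avgLen 3 (fun _ => (1:ℝ)/3) = 5/3 := by
      simp [avgLen, hI12]
      norm_num
    have hl2 : avgLen 3 p = p 1 + 2 * p 2 + 2 * p 3 := by
      rw [avgLen, hI12, Finset.sum_insert (by decide), Finset.sum_singleton]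
      norm_num
    have hsum3 : p 1 + p 2 + p 3 = 1 := by
      have h13 : Icc 1 3 = ({1, 2, 3} : Finset ℕ) := rfl
      rw [h13] at hsum
      simp at hsum
      linarith
    have h12 := hmono 1 2 le_rfl (by norm_num) (by norm_num)
    rw [hl1, hl2] at hle
    linarith
  · -- 4 ≤ n
    have h4 : 4 ≤ n := h4
    have h12 : p 2 ≤ p 1 := hmono 1 2 le_rfl (by omega) (by omega)
    rcases lt_or_eq_of_le h12 with hlt | heq
    · -- Case A : p 2 < p 1, move mass from symbol 1 to symbol 2
      set ε := min ((p 1 - p 2)/2) (p 1 - ∑ i ∈ Icc 3 n, p i) with hεdef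
      have hε : 0 < ε := lt_min (by linarith) (by linarith)
      have hε1 : ε ≤ (p 1 - p 2)/2 := min_le_left _ _
      have hε2 : ε ≤ p 1 - ∑ i ∈ Icc 3 n, p i := min_le_right _ _
      set p' : ℕ → ℝ := fun i => p i + (if i = 2 then ε else 0) - (if i = 1 then ε else 0)
        with hp'
      have hAUH : IsAUH n p' := by
        refine ⟨?_, ?_, ?_, ?_⟩
        · intro i hi
          simp only [mem_Icc] at hi
          by_cases hi1 : i = 1
          · subst hi1
            have := hnn 2 (by simp only [mem_Icc]; omega)
            simp [hp']
            linarith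
          · by_cases hi2 : i = 2
            · subst hi2
              have := hnn 2 (by simp only [mem_Icc]; omega)
              simp [hp']
              linarith
            · have := hnn i (by simp only [mem_Icc]; omega)
              simp [hp', hi1, hi2]
              linarith
        · intro i j hi hij hj
          rcases eq_or_lt_of_le hij with rfl | hlt'
          · exact le_rfl
          have hji : p j ≤ p i := hmono i j hi hij hj
          by_cases hi1 : i = 1
          · subst hi1
            by_cases hj2 : j = 2
            · subst hj2
              simp [hp']
              linarith
            · have hj1 : j ≠ 1 := by omega
              have h2j : p j ≤ p 2 := hmono 2 j (by omega) (by omega) hj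
              simp [hp', hj1, hj2]
              linarith
          · have hj1 : j ≠ 1 := by omega
            by_cases hi2 : i = 2
            · subst hi2
              have hj2 : j ≠ 2 := by omega
              simp [hp', hj1, hj2]
              linarith
            · have hj2 : j ≠ 2 := by omega
              simp [hp', hi1, hi2, hj1, hj2]
              linarith
        · have h1m : (1:ℕ) ∈ Icc 1 n := by simp only [mem_Icc]; omega
          have h2m : (2:ℕ) ∈ Icc 1 n := by simp only [mem_Icc]; omega
          simp only [hp']
          rw [sum_shift', if_pos h2m, if_pos h1m, hsum]
          ring
        · intro i hi1 hi2
          have hnotm1 : (1:ℕ) ∉ Icc (i+2) n := by simp only [mem_Icc]; omega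
          have hnotm2 : (2:ℕ) ∉ Icc (i+2) n := by simp only [mem_Icc]; omega
          simp only [hp']
          rw [sum_shift', if_neg hnotm2, if_neg hnotm1]
          by_cases hI : i = 1
          · subst hI
            simp
            linarith
          · by_cases hI2 : i = 2
            · subst hI2
              have := hc 2 (by omega) (by omega)
              simp
              linarith
            · have := hc i hi1 hi2
              simp [hI, hI2]
              linarith
      have hlen : avgLen n p' = avgLen n p + ε := by
        have h1m : (1:ℕ) ∈ Icc 1 (n-1) := by simp only [mem_Icc]; omega
        have h2m : (2:ℕ) ∈ Icc 1 (n-1) := by simp only [mem_Icc]; omega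
        have hn1 : n ≠ 1 := by omega
        have hn2 : n ≠ 2 := by omega
        simp only [avgLen, hp']
        rw [sum_shift_mul, if_pos h2m, if_pos h1m]
        simp [hn1, hn2]
        ring
      have := hmax p' hAUH
      rw [hlen] at this
      linarith
    · -- Case B : p 2 = p 1, move mass from symbol 2 to symbol 3
      set Q := ∑ i ∈ Icc 3 n, p i with hQdef
      set ε := (p 1 - Q)/2 with hεdef
      have hε : 0 < ε := by simp only [hεdef]; linarith
      have hQε : Q = p 1 - 2 * ε := by simp only [hεdef]; ring
      set p' : ℕ → ℝ := fun i => p i + (if i = 3 then ε else 0) - (if i = 2 then ε else 0)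
        with hp'
      have hAUH : IsAUH n p' := by
        refine ⟨?_, ?_, ?_, ?_⟩
        · intro i hi
          simp only [mem_Icc] at hi
          by_cases hi2 : i = 2
          · subst hi2
            simp [hp']
            linarith
          · by_cases hi3 : i = 3
            · subst hi3
              have := hnn 3 (by simp only [mem_Icc]; omega)
              simp [hp', hi2]
              linarith
            · have := hnn i (by simp only [mem_Icc]; omega)
              simp [hp', hi2, hi3]
              linarith
        · intro i j hi hij hj
          rcases eq_or_lt_of_le hij with rfl | hlt'
          · exact le_rfl
          have hji : p j ≤ p i := hmono i j hi hij hj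
          by_cases hi1 : i = 1
          · subst hi1
            by_cases hj2 : j = 2
            · subst hj2
              simp [hp']
              linarith
            · by_cases hj3 : j = 3
              · subst hj3
                simp [hp']
                linarith
              · have hj1 : j ≠ 1 := by omega
                simp [hp', hj1, hj2, hj3]
                linarith
          · by_cases hi2 : i = 2
            · subst hi2
              by_cases hj3 : j = 3
              · subst hj3
                simp [hp']
                linarith
              · have hj2 : j ≠ 2 := by omega
                have h3j : p j ≤ p 3 := hmono 3 j (by omega) (by omega) hj
                simp [hp', hj2, hj3]
                linarith
            · by_cases hi3 : i = 3
              · subst hi3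
                have hj2 : j ≠ 2 := by omega
                have hj3 : j ≠ 3 := by omega
                simp [hp', hj2, hj3]
                linarith
              · have hj2 : j ≠ 2 := by omega
                have hj3 : j ≠ 3 := by omega
                simp [hp', hi2, hi3, hj2, hj3]
                linarith
        · have h2m : (2:ℕ) ∈ Icc 1 n := by simp only [mem_Icc]; omega
          have h3m : (3:ℕ) ∈ Icc 1 n := by simp only [mem_Icc]; omega
          simp only [hp']
          rw [sum_shift', if_pos h3m, if_pos h2m, hsum]
          ring
        · intro i hi1 hi2
          have hnotm2 : (2:ℕ) ∉ Icc (i+2) n := by simp only [mem_Icc]; omega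
          simp only [hp']
          rw [sum_shift', if_neg hnotm2]
          by_cases hI : i = 1
          · subst hI
            have h3m : (3:ℕ) ∈ Icc 3 n := by simp only [mem_Icc]; omega
            rw [if_pos h3m]
            simp
            rw [← hQdef]
            linarith
          · by_cases hI2 : i = 2
            · subst hI2
              have hnotm3 : (3:ℕ) ∉ Icc 4 n := by simp only [mem_Icc]; omega
              rw [if_neg hnotm3]
              have hsub : ∑ j ∈ Icc 4 n, p j ≤ Q := by
                rw [hQdef]
                refine Finset.sum_le_sum_of_subset_of_nonneg ?_ ?_
                · exact Finset.Icc_subset_Icc_left (by omega)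
                · intro i hi _
                  exact hnn i (by simp only [mem_Icc] at hi ⊢; omega)
              simp
              linarith
            · have hnotm3 : (3:ℕ) ∉ Icc (i+2) n := by simp only [mem_Icc]; omega
              rw [if_neg hnotm3]
              have := hc i hi1 hi2
              by_cases hI3 : i = 3
              · subst hI3
                simp
                linarith
              · simp [hI2, hI3]
                linarith
      have hlen : avgLen n p' = avgLen n p + ε := by
        have h2m : (2:ℕ) ∈ Icc 1 (n-1) := by simp only [mem_Icc]; omega
        have h3m : (3:ℕ) ∈ Icc 1 (n-1) := by simp only [mem_Icc]; omega
        have hn2 : n ≠ 2 := by omega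
        have hn3 : n ≠ 3 := by omega
        simp only [avgLen, hp']
        rw [sum_shift_mul, if_pos h3m, if_pos h2m]
        simp [hn2, hn3]
        ring
      have := hmax p' hAUH
      rw [hlen] at this
      linarith
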